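/- For every integer n ≥ 0, if deg D_n > 0 then deg D_α divides deg D_n; that is, there exists a (necessarily positive) integer k with deg D_n = k·deg D_α. -/

import Mathlib

/-- For every `n ≥ 0`, if `deg D_n > 0` then `deg D_α` divides `deg D_n`. -/
theorem brieskorn_degD_alpha_dvd
    (m : ℕ) (hm : 3 ≤ m) (a : Fin m → ℕ)
    (ha : ∀ i, 2 ≤ a i) (hmono : Monotone a)
    (ℓ : ℕ) (hℓ : ℓ = Finset.univ.lcm a)
    (ℓi : Fin m → ℕ) (hℓi : ∀ i, ℓi i = (Finset.univ.erase i).lcm a)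
    (α : Fin m → ℕ) (hα : ∀ i, α i = ℓ / ℓi i)
    (αp : ℕ) (hαp : αp = ∏ i, α i)
    (e : Fin m → ℕ) (he : ∀ i, e i = ℓ / a i)
    (g : ℕ) (hg : g = (∏ i, a i) / ℓ)
    (gi : Fin m → ℕ) (hgi : ∀ i, gi i = g * α i / a i)
    (β : Fin m → ℕ) (hβ : ∀ i, β i < α i) (hβ' : ∀ i, α i ∣ e i * β i + 1)
    (c₀ : ℤ) (hc₀pos : 0 < c₀)
    (hc₀ : (c₀ : ℚ) = (∑ i, (gi i : ℚ) * (β i : ℚ) / (α i : ℚ))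
        + (∏ i, (a i : ℚ)) / (ℓ : ℚ) ^ 2)
    (degD : ℕ → ℤ)
    (hdegD : ∀ n : ℕ, degD n
        = (n : ℤ) * c₀ - ∑ i, (gi i : ℤ) * ⌈((n : ℚ) * (β i : ℚ)) / (α i : ℚ)⌉)
    :
    ∀ n : ℕ, 0 < degD n → degD αp ∣ degD n := by
  intro n _hn
  classical
  -- basic positivity and divisibility facts
  have hapos : ∀ i, 0 < a i := fun i => lt_of_lt_of_le (by norm_num) (ha i)
  have haℓ : ∀ i, a i ∣ ℓ := fun i => hℓ ▸ Finset.dvd_lcm (Finset.mem_univ i)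
  have hℓpos : 0 < ℓ := by
    refine Nat.pos_of_ne_zero fun h0 => ?_
    have h1 : (Finset.univ : Finset (Fin m)).lcm a = 0 := by rw [← hℓ, h0]
    obtain ⟨i, -, hi⟩ := Finset.lcm_eq_zero_iff.mp h1
    exact (hapos i).ne' hi
  have hℓiℓ : ∀ i, ℓi i ∣ ℓ := fun i => by
    rw [hℓi]; exact Finset.lcm_dvd fun j _ => haℓ j
  have hαmul : ∀ i, α i * ℓi i = ℓ := fun i => by
    rw [hα]; exact Nat.div_mul_cancel (hℓiℓ i)
  have hαpos : ∀ i, 0 < α i := fun i =>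
    Nat.pos_of_ne_zero fun h0 => by
      have := hαmul i; rw [h0, zero_mul] at this; omega
  have hℓipos : ∀ i, 0 < ℓi i := fun i =>
    Nat.pos_of_ne_zero fun h0 => by
      have := hαmul i; rw [h0, mul_zero] at this; omega
  have hemul : ∀ i, e i * a i = ℓ := fun i => by
    rw [he]; exact Nat.div_mul_cancel (haℓ i)
  have haℓi : ∀ i j, j ≠ i → a j ∣ ℓi i := fun i j hji => by
    rw [hℓi]; exact Finset.dvd_lcm (Finset.mem_erase.mpr ⟨hji, Finset.mem_univ j⟩)
  -- α i divides e j for j ≠ i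
  have hαe : ∀ i j, j ≠ i → α i ∣ e j := by
    intro i j hji
    refine ⟨ℓi i / a j, ?_⟩
    have h1 : (ℓi i / a j) * a j = ℓi i := Nat.div_mul_cancel (haℓi i j hji)
    have h2 : e j * a j = α i * (ℓi i / a j) * a j := by
      rw [hemul, mul_assoc, h1, hαmul]
    exact Nat.eq_of_mul_eq_mul_right (hapos j) h2
  -- ℓ divides the product
  have hPdvd : ℓ ∣ ∏ i, a i := by
    rw [hℓ]; exact Finset.lcm_dvd fun i _ => Finset.dvd_prod_of_mem a (Finset.mem_univ i)
  have hgmul : g * ℓ = ∏ i, a i := by rw [hg]; exact Nat.div_mul_cancel hPdvd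
  -- gi i * a i = g * α i
  have hgimul : ∀ i, gi i * a i = g * α i := by
    intro i
    have hdvd : a i ∣ g * α i := by
      obtain ⟨c, hc⟩ : ℓi i ∣ ∏ j ∈ Finset.univ.erase i, a j := by
        rw [hℓi]; exact Finset.lcm_dvd fun j hj => Finset.dvd_prod_of_mem a hj
      refine ⟨c, ?_⟩
      have h1 : g * α i * ℓi i = (a i * c) * ℓi i := by
        calc g * α i * ℓi i = g * ℓ := by rw [mul_assoc, hαmul]
          _ = ∏ j, a j := hgmul
          _ = a i * ∏ j ∈ Finset.univ.erase i, a j :=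
              (Finset.mul_prod_erase Finset.univ a (Finset.mem_univ i)).symm
          _ = a i * (ℓi i * c) := by rw [hc]
          _ = (a i * c) * ℓi i := by ring
      exact Nat.eq_of_mul_eq_mul_right (hℓipos i) h1
    rw [hgi]; exact Nat.div_mul_cancel hdvd
  -- coprimality
  have hcopae : ∀ i, Nat.Coprime (α i) (e i) := by
    intro i
    have h1 : Nat.gcd (α i) (e i) ∣ e i * β i + 1 := (Nat.gcd_dvd_left _ _).trans (hβ' i)
    have h2 : Nat.gcd (α i) (e i) ∣ e i * β i := (Nat.gcd_dvd_right _ _).mul_right _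
    have h3 := Nat.dvd_sub h1 h2
    simpa [Nat.Coprime] using Nat.dvd_one.mp (by simpa using h3)
  have hcop : ∀ i j, i ≠ j → Nat.Coprime (α i) (α j) := fun i j hij =>
    Nat.Coprime.coprime_dvd_right (hαe j i hij) (hcopae i)
  -- ceiling values
  set t : ℕ → Fin m → ℤ := fun N i => ⌈((N : ℚ) * (β i : ℚ)) / (α i : ℚ)⌉ with ht
  have hα0 : ∀ i, ((α i : ℚ)) ≠ 0 := fun i => by exact_mod_cast (hαpos i).ne'
  have hℓ0 : ((ℓ : ℚ)) ≠ 0 := by exact_mod_cast hℓpos.ne'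
  -- key rational identities
  have h4 : ∀ i, (gi i : ℚ) * ℓ = g * ((e i : ℚ) * α i) := by
    intro i
    have h1 : (gi i : ℚ) * a i = g * α i := by exact_mod_cast hgimul i
    have h2 : (e i : ℚ) * a i = ℓ := by exact_mod_cast hemul i
    calc (gi i : ℚ) * ℓ = (gi i * a i) * e i := by rw [← h2]; ring
      _ = (g * α i) * e i := by rw [h1]
      _ = g * ((e i : ℚ) * α i) := by ring
  have h5 : ∀ i, (gi i : ℚ) * β i / α i * ℓ = g * ((e i : ℚ) * β i) := by
    intro i
    calc (gi i : ℚ) * β i / α i * ℓ = ((gi i : ℚ) * ℓ) * β i / α i := by ring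
      _ = ((g : ℚ) * ((e i : ℚ) * α i)) * β i / α i := by rw [h4 i]
      _ = g * ((e i : ℚ) * β i) := by rw [div_eq_iff (hα0 i)]; ring
  have key : ∀ N : ℕ, (degD N : ℚ) * ℓ
      = g * ((N : ℚ) - ∑ i, (e i : ℚ) * ((α i : ℚ) * (t N i : ℚ) - (N : ℚ) * (β i : ℚ))) := by
    intro N
    have hP : (∏ i, (a i : ℚ)) = (g : ℚ) * ℓ := by
      rw [← Nat.cast_prod, ← hgmul]; push_cast; ring
    have hsum1 : (∑ i, (gi i : ℚ) * β i / α i) * ℓ = ∑ i, (g : ℚ) * ((e i : ℚ) * β i) := by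
      rw [Finset.sum_mul]; exact Finset.sum_congr rfl fun i _ => h5 i
    have hsum2 : (∑ i, (gi i : ℚ) * (t N i : ℚ)) * ℓ
        = ∑ i, (g : ℚ) * ((e i : ℚ) * ((α i : ℚ) * (t N i : ℚ))) := by
      rw [Finset.sum_mul]
      refine Finset.sum_congr rfl fun i _ => ?_
      calc (gi i : ℚ) * (t N i : ℚ) * ℓ = ((gi i : ℚ) * ℓ) * (t N i : ℚ) := by ring
        _ = _ := by rw [h4 i]; ring
    have hsum3 : (g : ℚ) * (∑ i, (e i : ℚ) * ((α i : ℚ) * (t N i : ℚ) - (N : ℚ) * (β i : ℚ)))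
        = (∑ i, (g : ℚ) * ((e i : ℚ) * ((α i : ℚ) * (t N i : ℚ))))
          - (N : ℚ) * (∑ i, (g : ℚ) * ((e i : ℚ) * β i)) := by
      rw [Finset.mul_sum, Finset.mul_sum, ← Finset.sum_sub_distrib]
      exact Finset.sum_congr rfl fun i _ => by ring
    have hPQ : (∏ i, (a i : ℚ)) / (ℓ : ℚ) ^ 2 * ℓ = g := by
      rw [hP]; field_simp
    have hD : (degD N : ℚ) = (N : ℚ) * c₀ - ∑ i, (gi i : ℚ) * (t N i : ℚ) := by
      rw [hdegD N]; push_cast; rfl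
    rw [hD, hc₀]
    linear_combination (N : ℚ) * hsum1 + (N : ℚ) * hPQ - hsum2 + hsum3
  -- at n = αp the correction terms vanish
  have keyp : (degD αp : ℚ) * ℓ = (g : ℚ) * αp := by
    have hS0 : ∀ i, (α i : ℚ) * (t αp i : ℚ) - (αp : ℚ) * (β i : ℚ) = 0 := by
      intro i
      obtain ⟨k, hk⟩ : α i ∣ αp * β i := Dvd.dvd.mul_right
        (hαp ▸ Finset.dvd_prod_of_mem α (Finset.mem_univ i)) _
      have hcast : ((αp : ℚ) * (β i : ℚ)) = (α i : ℚ) * (k : ℚ) := by exact_mod_cast hk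
      have h1 : ((αp : ℚ) * (β i : ℚ)) / (α i : ℚ) = ((k : ℕ) : ℚ) := by
        rw [hcast]; exact mul_div_cancel_left₀ _ (hα0 i)
      have h2 : t αp i = (k : ℤ) := by
        show ⌈((αp : ℚ) * (β i : ℚ)) / (α i : ℚ)⌉ = (k : ℤ)
        rw [h1]; exact_mod_cast Int.ceil_natCast (R := ℚ) k
      rw [h2, Int.cast_natCast]
      linear_combination -hcast
    rw [key αp,
      show (∑ i, (e i : ℚ) * ((α i : ℚ) * (t αp i : ℚ) - (αp : ℚ) * (β i : ℚ))) = 0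
        from Finset.sum_eq_zero fun i _ => by rw [hS0 i, mul_zero],
      sub_zero]
  -- the integer N and its divisibility by αp
  set S : Fin m → ℤ := fun i => (α i : ℤ) * t n i - (n : ℤ) * β i with hS
  set Nint : ℤ := (n : ℤ) - ∑ i, (e i : ℤ) * S i with hNint
  have hdvdi : ∀ i, (α i : ℤ) ∣ Nint := by
    intro i
    rw [hNint, ← Finset.add_sum_erase _ _ (Finset.mem_univ i)]
    have h1 : (α i : ℤ) ∣ (n : ℤ) - (e i : ℤ) * S i := by
      have hb : (α i : ℤ) ∣ ((e i : ℤ) * β i + 1) := by exact_mod_cast hβ' i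
      have hd1 : (α i : ℤ) ∣ (n : ℤ) * ((e i : ℤ) * β i + 1) := hb.mul_left _
      have hd2 : (α i : ℤ) ∣ (α i : ℤ) * ((e i : ℤ) * t n i) := dvd_mul_right _ _
      have heq : (n : ℤ) - (e i : ℤ) * S i
          = (n : ℤ) * ((e i : ℤ) * β i + 1) - (α i : ℤ) * ((e i : ℤ) * t n i) := by
        simp only [hS]; ring
      rw [heq]; exact dvd_sub hd1 hd2
    have h2 : (α i : ℤ) ∣ ∑ j ∈ Finset.univ.erase i, (e j : ℤ) * S j := by
      refine Finset.dvd_sum fun j hj => ?_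
      have hd : (α i : ℤ) ∣ (e j : ℤ) :=
        Int.natCast_dvd_natCast.mpr (hαe i j (Finset.mem_erase.mp hj).1)
      exact hd.mul_right _
    have heq2 : (n : ℤ) - ((e i : ℤ) * S i + ∑ j ∈ Finset.univ.erase i, (e j : ℤ) * S j)
        = ((n : ℤ) - (e i : ℤ) * S i) - ∑ j ∈ Finset.univ.erase i, (e j : ℤ) * S j := by ring
    rw [heq2]
    exact dvd_sub h1 h2
  have hdvdp : (αp : ℤ) ∣ Nint := by
    have hcast : (αp : ℤ) = ∏ i, (α i : ℤ) := by rw [hαp]; push_cast; rfl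
    rw [hcast]
    exact Fintype.prod_dvd_of_coprime
      (fun i j hij => Nat.isCoprime_iff_coprime.mpr (hcop i j hij)) hdvdi
  obtain ⟨K, hK⟩ := hdvdp
  refine ⟨K, ?_⟩
  have hNcast : ((Nint : ℚ))
      = (n : ℚ) - ∑ i, (e i : ℚ) * ((α i : ℚ) * (t n i : ℚ) - (n : ℚ) * (β i : ℚ)) := by
    simp only [hNint, hS]
    push_cast
    ring
  have hNK : ((Nint : ℚ)) = (αp : ℚ) * (K : ℚ) := by exact_mod_cast hK
  have hq : (degD n : ℚ) * ℓ = ((degD αp : ℚ) * (K : ℚ)) * ℓ := by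
    rw [key n, ← hNcast, hNK]
    linear_combination (-(K : ℚ)) * keyp
  have hfin : (degD n : ℚ) = (degD αp : ℚ) * (K : ℚ) := mul_right_cancel₀ hℓ0 hq
  exact_mod_cast hfin
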